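/- Theorem (Uniform convergence of the Deep Ritz Method): In the two-norm Setting with Assumptions (A1), (A4) and (A5), assume moreover the uniform equi-coercivity condition: for every bounded sequence (g_n) in Y* the sequence of functionals (F_n^{g_n∘j}) is equi-coercive. Let (δ_n) be a sequence of non-negative reals with δ_n → 0, and for f ∈ X* define the approximate solution sets S_n(f) = {x ∈ X : F_n^f(x) ≤ inf_{z∈X} F_n^f(z) + δ_n}. For g ∈ Y* let x^{g∘j} ∈ X₀ denote the unique minimizer of F^{g∘j}. Then for every R > 0, sup{ ‖j(x_n) − j(x^{g∘j})‖_Y : g ∈ Y*, ‖g‖_{Y*} ≤ R, x_n ∈ S_n(g∘j) } → 0 as n → ∞. -/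

import Mathlib

open Filter Topology
open scoped Classical

/-- Weak convergence of a sequence in a normed space: convergence tested against
every continuous linear functional. -/
def WeakTendsto {X : Type*} [NormedAddCommGroup X] [NormedSpace ℝ X]
    (u : ℕ → X) (x : X) : Prop :=
  ∀ φ : X →L[ℝ] ℝ, Tendsto (fun n => φ (u n)) atTop (𝓝 (φ x))

namespace DeepRitzAux

open Function NormedSpace TopologicalSpace

variable {W : Type*} [NormedAddCommGroup W] [NormedSpace ℝ W]

/-- Hahn-Banach separation of a point from a closed subspace. -/
lemma exists_dual_annihilator (Z : Submodule ℝ W) (hZ : IsClosed (Z : Set W))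
    {x : W} (hx : x ∉ Z) :
    ∃ f : W →L[ℝ] ℝ, (∀ z ∈ Z, f z = 0) ∧ f x ≠ 0 := by
  obtain ⟨f, u, hfx, hfz⟩ := geometric_hahn_banach_point_closed Z.convex hZ hx
  have hf0 : ∀ z ∈ Z, f z = 0 := by
    intro z hz
    by_contra hne
    have h1 : u < ((u - 1) / f z) * f z := by
      simpa [map_smul, smul_eq_mul] using hfz (((u - 1) / f z) • z) (Z.smul_mem _ hz)
    rw [div_mul_cancel₀ _ hne] at h1
    linarith
  have hu0 : u < 0 := by simpa using hfz 0 Z.zero_mem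
  exact ⟨f, hf0, by intro h; rw [h] at hfx; linarith⟩

/-- If the span of a countable set is dense, the space is separable. -/
lemma separableSpace_of_dense_span {s : Set W} (hs : s.Countable)
    (hd : Dense (Submodule.span ℝ s : Set W)) : SeparableSpace W := by
  have h1 : IsSeparable (Submodule.span ℝ s : Set W) := hs.isSeparable.span
  have h2 : IsSeparable (Set.univ : Set W) := by
    rw [← hd.closure_eq]
    exact h1.closure
  exact isSeparable_univ_iff.mp h2

/-- A closed subspace of a reflexive space is reflexive. -/
lemma subspace_reflexive (hrefl : Surjective (inclusionInDoubleDual ℝ W))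
    (Z : Submodule ℝ W) (hZ : IsClosed (Z : Set W)) :
    Surjective (inclusionInDoubleDual ℝ ↥Z) := by
  intro ζ
  -- the restriction operator as a linear map
  let ρ : (W →L[ℝ] ℝ) →ₗ[ℝ] (↥Z →L[ℝ] ℝ) :=
    { toFun := fun f => f.comp Z.subtypeL
      map_add' := fun f g => by ext z; simp
      map_smul' := fun c f => by ext z; simp }
  have hρ : ∀ f : W →L[ℝ] ℝ, ‖ρ f‖ ≤ ‖f‖ := by
    intro f
    refine ContinuousLinearMap.opNorm_le_bound _ (norm_nonneg f) fun z => ?_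
    exact f.le_opNorm (z : W)
  let Φlin : (W →L[ℝ] ℝ) →ₗ[ℝ] ℝ := (ζ.toLinearMap).comp ρ
  have hΦb : ∀ f : W →L[ℝ] ℝ, ‖Φlin f‖ ≤ ‖ζ‖ * ‖f‖ := by
    intro f
    calc ‖ζ (ρ f)‖ ≤ ‖ζ‖ * ‖ρ f‖ := ζ.le_opNorm _
    _ ≤ ‖ζ‖ * ‖f‖ := by
        exact mul_le_mul_of_nonneg_left (hρ f) (norm_nonneg ζ)
  let Φ : (W →L[ℝ] ℝ) →L[ℝ] ℝ := LinearMap.mkContinuous Φlin ‖ζ‖ hΦb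
  obtain ⟨w₀, hw₀⟩ := hrefl Φ
  have hw : ∀ f : W →L[ℝ] ℝ, f w₀ = ζ (f.comp Z.subtypeL) := by
    intro f
    have := congrArg (fun T => T f) hw₀
    have h' : f w₀ = Φ f := by simpa [dual_def] using this
    exact h'
  have hmem : w₀ ∈ Z := by
    by_contra hmem
    obtain ⟨f, hf0, hfx⟩ := exists_dual_annihilator Z hZ hmem
    have hcomp : f.comp Z.subtypeL = 0 := by
      ext z; exact hf0 z z.2
    have := hw f
    rw [hcomp, map_zero] at this
    exact hfx this
  refine ⟨⟨w₀, hmem⟩, ?_⟩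
  ext h
  obtain ⟨g, hg, -⟩ := exists_extension_norm_eq Z h
  have hcomp : g.comp Z.subtypeL = h := by
    ext z; exact hg z
  have := hw g
  rw [hcomp] at this
  calc inclusionInDoubleDual ℝ ↥Z ⟨w₀, hmem⟩ h = h ⟨w₀, hmem⟩ := dual_def ℝ ↥Z _ _
  _ = g w₀ := (hg ⟨w₀, hmem⟩).symm
  _ = ζ h := this

/-- The dual of a reflexive space is reflexive. -/
lemma dual_reflexive (hrefl : Surjective (inclusionInDoubleDual ℝ W)) :
    Surjective (inclusionInDoubleDual ℝ (W →L[ℝ] ℝ)) := by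
  intro Ξ
  refine ⟨Ξ.comp (inclusionInDoubleDual ℝ W), ?_⟩
  ext Φ
  obtain ⟨w, rfl⟩ := hrefl Φ
  simp [dual_def]

/-- If the dual of a normed space is separable, so is the space. -/
lemma separable_of_dual_separable (h : SeparableSpace (W →L[ℝ] ℝ)) :
    SeparableSpace W := by
  haveI := h
  haveI : Nonempty (W →L[ℝ] ℝ) := ⟨0⟩
  set G : ℕ → W →L[ℝ] ℝ := denseSeq (W →L[ℝ] ℝ) with hG
  have hGd : DenseRange G := denseRange_denseSeq _
  have hv : ∀ i : ℕ, ∃ x : W, ‖x‖ ≤ 1 ∧ ‖G i‖ / 2 ≤ ‖G i x‖ := by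
    intro i
    rcases eq_or_lt_of_le (norm_nonneg (G i)) with h0 | h0
    · exact ⟨0, by simp, by simp [← h0]⟩
    · obtain ⟨x, hx1, hx2⟩ := (G i).exists_lt_apply_of_lt_opNorm (half_lt_self h0)
      exact ⟨x, hx1.le, hx2.le⟩
  choose v hv1 hv2 using hv
  apply separableSpace_of_dense_span (Set.countable_range v)
  set Z : Submodule ℝ W := (Submodule.span ℝ (Set.range v)).topologicalClosure with hZdef
  have hZc : IsClosed (Z : Set W) := Submodule.isClosed_topologicalClosure _
  have hcoe : (Z : Set W) = closure (Submodule.span ℝ (Set.range v) : Set W) :=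
    Submodule.topologicalClosure_coe _
  by_contra hd
  rw [dense_iff_closure_eq, ← hcoe] at hd
  obtain ⟨x, hx⟩ := (Set.ne_univ_iff_exists_notMem _).mp hd
  obtain ⟨f, hf0, hfx⟩ := exists_dual_annihilator Z hZc hx
  have hfpos : 0 < ‖f‖ := norm_pos_iff.mpr (fun h => hfx (by simp [h]))
  obtain ⟨i, hi⟩ := Metric.denseRange_iff.mp hGd f (‖f‖ / 3) (by linarith)
  have hdist : ‖G i - f‖ < ‖f‖ / 3 := by
    rw [← dist_eq_norm, dist_comm]; exact hi
  have hGi : 2 * ‖f‖ / 3 ≤ ‖G i‖ := by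
    have h1 := norm_sub_norm_le f (G i)
    rw [norm_sub_rev f (G i)] at h1
    linarith
  have hfv : f (v i) = 0 := by
    apply hf0
    apply Submodule.le_topologicalClosure
    exact Submodule.subset_span ⟨i, rfl⟩
  have hGiv : ‖G i (v i)‖ < ‖f‖ / 3 := by
    have : G i (v i) = (G i - f) (v i) := by simp [hfv]
    rw [this]
    calc ‖(G i - f) (v i)‖ ≤ ‖G i - f‖ * ‖v i‖ := (G i - f).le_opNorm _
    _ ≤ ‖G i - f‖ := mul_le_of_le_one_right (norm_nonneg _) (hv1 i)
    _ < ‖f‖ / 3 := hdist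
  have := hv2 i
  linarith [hGi, hGiv, this]

/-- Weak-* sequential compactness of bounded sequences in the dual of a
separable normed space. -/
lemma weakstar_seq_compact {V : Type*} [NormedAddCommGroup V] [NormedSpace ℝ V]
    [SeparableSpace V]
    (T : ℕ → V →L[ℝ] ℝ) (M : ℝ) (hb : ∀ k, ‖T k‖ ≤ M) :
    ∃ ψ : ℕ → ℕ, StrictMono ψ ∧ ∃ T₀ : V →L[ℝ] ℝ,
      ∀ v : V, Tendsto (fun k => T (ψ k) v) atTop (𝓝 (T₀ v)) := by
  haveI : Nonempty V := ⟨0⟩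
  have hM0 : 0 ≤ M := le_trans (norm_nonneg _) (hb 0)
  set v : ℕ → V := denseSeq V with hvdef
  have hvd : DenseRange v := denseRange_denseSeq V
  -- extract a subsequence converging at each point of the dense sequence
  set s : Set (ℕ → ℝ) := Set.pi Set.univ (fun i => Set.Icc (-(M * ‖v i‖)) (M * ‖v i‖))
    with hsdef
  have hs : IsCompact s := isCompact_univ_pi fun i => isCompact_Icc
  have hmem : ∀ k, (fun i => T k (v i)) ∈ s := by
    intro k i _
    have h1 : ‖T k (v i)‖ ≤ M * ‖v i‖ := le_trans ((T k).le_opNorm _)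
      (mul_le_mul_of_nonneg_right (hb k) (norm_nonneg _))
    rw [Real.norm_eq_abs, abs_le] at h1
    exact ⟨h1.1, h1.2⟩
  obtain ⟨L, -, ψ, hψ, hconv⟩ := hs.isSeqCompact hmem
  have hpt : ∀ i, Tendsto (fun k => T (ψ k) (v i)) atTop (𝓝 (L i)) := by
    intro i
    exact (tendsto_pi_nhds.mp hconv) i
  -- convergence at every point, by density
  have hlim : ∀ x : V, ∃ l : ℝ, Tendsto (fun k => T (ψ k) x) atTop (𝓝 l) := by
    intro x
    have hC : CauchySeq fun k => T (ψ k) x := by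
      rw [Metric.cauchySeq_iff]
      intro ε hε
      have hεM : 0 < ε / (3 * (M + 1)) := by positivity
      obtain ⟨i, hi⟩ := Metric.denseRange_iff.mp hvd x _ hεM
      have hc := (hpt i).cauchySeq
      rw [Metric.cauchySeq_iff] at hc
      obtain ⟨N, hN⟩ := hc (ε / 3) (by linarith)
      refine ⟨N, fun m hm n hn => ?_⟩
      have key : ∀ k, ‖T (ψ k) x - T (ψ k) (v i)‖ ≤ ε / 3 := by
        intro k
        have : ‖T (ψ k) x - T (ψ k) (v i)‖ = ‖T (ψ k) (x - v i)‖ := by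
          rw [map_sub]
        rw [this]
        calc ‖T (ψ k) (x - v i)‖ ≤ ‖T (ψ k)‖ * ‖x - v i‖ := (T (ψ k)).le_opNorm _
        _ ≤ M * (ε / (3 * (M + 1))) := by
            apply mul_le_mul (hb (ψ k)) _ (norm_nonneg _) hM0
            rw [← dist_eq_norm]
            exact hi.le
        _ ≤ (M + 1) * (ε / (3 * (M + 1))) := by
            apply mul_le_mul_of_nonneg_right (by linarith) hεM.le
        _ = ε / 3 := by
            field_simp
      have h2 := hN m hm n hn
      rw [Real.dist_eq] at h2 ⊢
      have k1 := key m
      have k2 := key n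
      rw [Real.norm_eq_abs] at k1 k2
      have : T (ψ m) x - T (ψ n) x = (T (ψ m) x - T (ψ m) (v i))
        + (T (ψ m) (v i) - T (ψ n) (v i)) + (T (ψ n) (v i) - T (ψ n) x) := by ring
      rw [this]
      calc |_ + _ + _| ≤ |T (ψ m) x - T (ψ m) (v i)| + |T (ψ m) (v i) - T (ψ n) (v i)|
          + |T (ψ n) (v i) - T (ψ n) x| := abs_add_three _ _ _
      _ < ε := by
          have k2' : |T (ψ n) (v i) - T (ψ n) x| = |T (ψ n) x - T (ψ n) (v i)| :=
            abs_sub_comm _ _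
          linarith
    exact cauchySeq_tendsto_of_complete hC
  choose l hl using hlim
  have hadd : ∀ x y : V, l (x + y) = l x + l y := fun x y => by
    refine tendsto_nhds_unique ?_ ((hl x).add (hl y))
    have : (fun k => T (ψ k) (x + y)) = fun k => T (ψ k) x + T (ψ k) y := by
      funext k; rw [map_add]
    rw [← this]
    exact hl (x + y)
  have hsmul : ∀ (c : ℝ) (x : V), l (c • x) = c * l x := fun c x => by
    refine tendsto_nhds_unique ?_ ((hl x).const_mul c)
    have : (fun k => T (ψ k) (c • x)) = fun k => c * T (ψ k) x := by
      funext k; rw [map_smul, smul_eq_mul]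
    rw [← this]
    exact hl (c • x)
  have hbound : ∀ x : V, ‖l x‖ ≤ M * ‖x‖ := fun x => by
    have : Tendsto (fun k => ‖T (ψ k) x‖) atTop (𝓝 ‖l x‖) := (hl x).norm
    refine le_of_tendsto this (Eventually.of_forall fun k => ?_)
    exact le_trans ((T (ψ k)).le_opNorm _)
      (mul_le_mul_of_nonneg_right (hb (ψ k)) (norm_nonneg _))
  refine ⟨ψ, hψ, LinearMap.mkContinuous
    { toFun := l, map_add' := hadd, map_smul' := hsmul } M hbound, fun x => hl x⟩

/-- Bounded sequences in a reflexive Banach space have weakly convergent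
subsequences. -/
lemma weak_seq_compact [CompleteSpace W]
    (hrefl : Surjective (inclusionInDoubleDual ℝ W))
    (w : ℕ → W) (M : ℝ) (hb : ∀ k, ‖w k‖ ≤ M) :
    ∃ ψ : ℕ → ℕ, StrictMono ψ ∧ ∃ w₀ : W,
      ∀ f : W →L[ℝ] ℝ, Tendsto (fun k => f (w (ψ k))) atTop (𝓝 (f w₀)) := by
  set Z : Submodule ℝ W := (Submodule.span ℝ (Set.range w)).topologicalClosure with hZdef
  have hZc : IsClosed (Z : Set W) := Submodule.isClosed_topologicalClosure _
  haveI : CompleteSpace ↥Z := hZc.completeSpace_coe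
  have hZsep : SeparableSpace ↥Z := by
    have h1 : IsSeparable (Z : Set W) := by
      rw [hZdef, Submodule.topologicalClosure_coe]
      exact ((Set.countable_range w).isSeparable.span).closure
    exact h1.separableSpace
  have hZrefl := subspace_reflexive hrefl Z hZc
  haveI : SeparableSpace (↥Z →L[ℝ] ℝ) := by
    exact separable_of_dual_separable (W := ↥Z →L[ℝ] ℝ) (by
    haveI := hZsep
    have hsurj : Surjective (inclusionInDoubleDual ℝ ↥Z) := hZrefl
    have hcont : Continuous (inclusionInDoubleDual ℝ ↥Z) :=
      (inclusionInDoubleDual ℝ ↥Z).continuous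
    exact (hsurj.denseRange).separableSpace hcont)
  have hmemZ : ∀ k, w k ∈ Z := fun k =>
    Submodule.le_topologicalClosure _ (Submodule.subset_span ⟨k, rfl⟩)
  obtain ⟨ψ, hψ, T₀, hT⟩ := weakstar_seq_compact
    (fun k => inclusionInDoubleDual ℝ ↥Z ⟨w k, hmemZ k⟩) M
    (fun k => by
      have h1 : ‖inclusionInDoubleDual ℝ ↥Z ⟨w k, hmemZ k⟩‖
          = ‖(⟨w k, hmemZ k⟩ : ↥Z)‖ :=
        (inclusionInDoubleDualLi ℝ (E := ↥Z)).norm_map (⟨w k, hmemZ k⟩ : ↥Z)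
      rw [h1]
      exact hb k)
  obtain ⟨z₀, hz₀⟩ := hZrefl T₀
  refine ⟨ψ, hψ, (z₀ : W), fun f => ?_⟩
  have h1 := hT (f.comp Z.subtypeL)
  have h2 : ∀ k, inclusionInDoubleDual ℝ ↥Z ⟨w (ψ k), hmemZ (ψ k)⟩ (f.comp Z.subtypeL)
      = f (w (ψ k)) := fun k => by
    rw [dual_def]; rfl
  have h3 : T₀ (f.comp Z.subtypeL) = f (z₀ : W) := by
    rw [← hz₀, dual_def]; rfl
  rw [← h3]
  simpa [h2] using h1

/-- Pointwise convergent, uniformly bounded functionals applied to a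
norm-convergent sequence. -/
lemma tendsto_apply_seq {Y : Type*} [NormedAddCommGroup Y] [NormedSpace ℝ Y]
    (g : ℕ → Y →L[ℝ] ℝ) (g₀ : Y →L[ℝ] ℝ) (C : ℝ)
    (hbd : ∀ k, ‖g k‖ ≤ C)
    (s : ℕ → Y) (y₀ : Y) (hs : Tendsto s atTop (𝓝 y₀))
    (hpt : Tendsto (fun k => g k y₀) atTop (𝓝 (g₀ y₀))) :
    Tendsto (fun k => g k (s k)) atTop (𝓝 (g₀ y₀)) := by
  rw [tendsto_iff_dist_tendsto_zero]
  have hb : ∀ k, dist (g k (s k)) (g₀ y₀) ≤ C * ‖s k - y₀‖ + dist (g k y₀) (g₀ y₀) := by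
    intro k
    calc dist (g k (s k)) (g₀ y₀) ≤ dist (g k (s k)) (g k y₀) + dist (g k y₀) (g₀ y₀) :=
      dist_triangle _ _ _
    _ ≤ C * ‖s k - y₀‖ + dist (g k y₀) (g₀ y₀) := by
        apply add_le_add_left
        rw [dist_eq_norm, ← map_sub]
        exact le_trans ((g k).le_opNorm _)
          (mul_le_mul_of_nonneg_right (hbd k) (norm_nonneg _))
  have h1 : Tendsto (fun k => C * ‖s k - y₀‖ + dist (g k y₀) (g₀ y₀)) atTop (𝓝 0) := by
    have h2 : Tendsto (fun k => ‖s k - y₀‖) atTop (𝓝 0) :=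
      tendsto_iff_norm_sub_tendsto_zero.mp hs
    have h3 : Tendsto (fun k => dist (g k y₀) (g₀ y₀)) atTop (𝓝 0) :=
      tendsto_iff_dist_tendsto_zero.mp hpt
    simpa using (h2.const_mul C).add h3
  exact squeeze_zero (fun k => dist_nonneg) hb h1

end DeepRitzAux

set_option maxHeartbeats 2000000 in
set_option synthInstance.maxHeartbeats 400000 in
/-- **Uniform convergence of the Deep Ritz Method.**
In the two-norm Deep Ritz setting with Assumptions (A1), (A4), (A5) and a
uniform equi-coercivity condition, the convergence of quasi-minimizers towards
the exact solution, measured in the weaker norm `|x| = ‖j x‖`, is uniform over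
all right-hand sides `g ∈ Y*` with `‖g‖ ≤ R`. -/
theorem deep_ritz_uniform_convergence
    {X B Y : Type*} [NormedAddCommGroup X] [NormedSpace ℝ X] [CompleteSpace X]
    [NormedAddCommGroup B] [NormedSpace ℝ B] [CompleteSpace B]
    [NormedAddCommGroup Y] [NormedSpace ℝ Y] [CompleteSpace Y]
    (hXrefl : Function.Surjective (NormedSpace.inclusionInDoubleDual ℝ X))
    (hBrefl : Function.Surjective (NormedSpace.inclusionInDoubleDual ℝ B))
    (hYrefl : Function.Surjective (NormedSpace.inclusionInDoubleDual ℝ Y))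
    (γ : X →L[ℝ] B)
    (E : X → ℝ)
    -- E is bounded from below
    (hEbdd : ∃ m : ℝ, ∀ x : X, m ≤ E x)
    -- E is (sequentially) lower semicontinuous w.r.t. the weak topology of X
    (hElsc : ∀ (x : X) (u : ℕ → X), WeakTendsto u x →
      ((E x : EReal)) ≤ liminf (fun n => ((E (u n) : EReal))) atTop)
    -- E is continuous w.r.t. the norm topology of X
    (hEcont : Continuous E)
    (p : ℝ) (hp : 1 < p)
    (lam : ℕ → ℝ) (hlam_pos : ∀ n, 0 < lam n) (hlam : Tendsto lam atTop atTop)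
    (A : ℕ → Set X)
    -- the penalized functionals with right-hand side f
    (Fn : (X →L[ℝ] ℝ) → ℕ → X → EReal)
    (hFn : ∀ (f : X →L[ℝ] ℝ) (n : ℕ) (x : X), Fn f n x =
      if x ∈ A n then ((E x + lam n * ‖γ x‖ ^ p - f x : ℝ) : EReal) else ⊤)
    -- the limit functionals with right-hand side f
    (F : (X →L[ℝ] ℝ) → X → EReal)
    (hF : ∀ (f : X →L[ℝ] ℝ) (x : X),
      F f x = if γ x = 0 then ((E x - f x : ℝ) : EReal) else ⊤)
    -- Assumption (A1)
    (hA1 : ∀ x : X, γ x = 0 → ∃ u : ℕ → X, (∀ n, u n ∈ A n) ∧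
      Tendsto u atTop (𝓝 x) ∧
      Tendsto (fun n => lam n * ‖γ (u n)‖ ^ p) atTop (𝓝 0))
    -- the second norm, encoded by an injective dense-range embedding j : X → Y
    (j : X →L[ℝ] Y) (hj_inj : Function.Injective j) (hj_dense : DenseRange j)
    -- Assumption (A4): j is completely continuous
    (hA4 : ∀ (u : ℕ → X) (x : X), WeakTendsto u x →
      Tendsto (fun n => j (u n)) atTop (𝓝 (j x)))
    -- Assumption (A5): unique minimizers and a demi-continuous solution map S
    (S : (↥(LinearMap.ker (γ : X →ₗ[ℝ] B)) →L[ℝ] ℝ) → ↥(LinearMap.ker (γ : X →ₗ[ℝ] B)))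
    (hS_min : ∀ (f : X →L[ℝ] ℝ) (z : X),
      F f ((S (f.comp (LinearMap.ker (γ : X →ₗ[ℝ] B)).subtypeL) : X)) ≤ F f z)
    (hS_uniq : ∀ (f : X →L[ℝ] ℝ) (y : X), γ y = 0 →
      (∀ z : X, F f y ≤ F f z) → y = (S (f.comp (LinearMap.ker (γ : X →ₗ[ℝ] B)).subtypeL) : X))
    (hS_demi : ∀ (φ : ℕ → (↥(LinearMap.ker (γ : X →ₗ[ℝ] B)) →L[ℝ] ℝ))
      (φ₀ : ↥(LinearMap.ker (γ : X →ₗ[ℝ] B)) →L[ℝ] ℝ), Tendsto φ atTop (𝓝 φ₀) →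
      ∀ ψ : ↥(LinearMap.ker (γ : X →ₗ[ℝ] B)) →L[ℝ] ℝ,
        Tendsto (fun n => ψ (S (φ n))) atTop (𝓝 (ψ (S φ₀))))
    -- uniform equi-coercivity: for every bounded sequence of right-hand sides
    -- in Y*, the corresponding penalized functionals are equi-coercive
    (hcoer : ∀ g : ℕ → (Y →L[ℝ] ℝ), (∃ M : ℝ, ∀ n, ‖g n‖ ≤ M) →
      ∀ r : ℝ, ∃ C : ℝ, ∀ (n : ℕ) (x : X),
        Fn ((g n).comp j) n x ≤ (r : EReal) → ‖x‖ ≤ C)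
    -- tolerances for the approximate solution sets
    (δ : ℕ → ℝ) (hδ0 : ∀ n, 0 ≤ δ n) (hδ : Tendsto δ atTop (𝓝 0))
    (R : ℝ) (hR : 0 < R) :
    -- uniform convergence over the ball ‖g‖ ≤ R in Y*
    ∀ ε : ℝ, 0 < ε → ∃ N : ℕ, ∀ n : ℕ, N ≤ n →
      ∀ g : Y →L[ℝ] ℝ, ‖g‖ ≤ R →
        ∀ x : X,
          Fn (g.comp j) n x ≤ (⨅ z : X, Fn (g.comp j) n z) + (δ n : EReal) →
          ‖j x - j ((S ((g.comp j).comp (LinearMap.ker (γ : X →ₗ[ℝ] B)).subtypeL) : X))‖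
            ≤ ε := by
  intro ε hε
  by_contra hcon
  push_neg at hcon
  obtain ⟨m, hm⟩ := hEbdd
  have hp0 : (0 : ℝ) < p := by linarith
  have hpen_nn : ∀ (n : ℕ) (x : X), 0 ≤ lam n * ‖γ x‖ ^ p := fun n x =>
    mul_nonneg (hlam_pos n).le (Real.rpow_nonneg (norm_nonneg _) p)
  -- recovery sequence at 0
  obtain ⟨u0, hu0A, hu0lim, hu0pen⟩ := hA1 0 (map_zero γ)
  obtain ⟨K1, hK1⟩ : ∃ K, ∀ n, E (u0 n) ≤ K := by
    obtain ⟨K, hK⟩ := (Filter.Tendsto.bddAbove_range ((hEcont.tendsto 0).comp hu0lim))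
    exact ⟨K, fun n => hK ⟨n, rfl⟩⟩
  obtain ⟨K2, hK2⟩ : ∃ K, ∀ n, lam n * ‖γ (u0 n)‖ ^ p ≤ K := by
    obtain ⟨K, hK⟩ := hu0pen.bddAbove_range
    exact ⟨K, fun n => hK ⟨n, rfl⟩⟩
  obtain ⟨K3, hK3⟩ : ∃ K, ∀ n, ‖u0 n‖ ≤ K := by
    obtain ⟨K, hK⟩ := hu0lim.norm.bddAbove_range
    exact ⟨K, fun n => hK ⟨n, rfl⟩⟩
  obtain ⟨D, hD⟩ : ∃ D, ∀ n, δ n ≤ D := by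
    obtain ⟨K, hK⟩ := hδ.bddAbove_range
    exact ⟨K, fun n => hK ⟨n, rfl⟩⟩
  have hgj : ∀ (g : Y →L[ℝ] ℝ) (x : X), ‖g‖ ≤ R → |g (j x)| ≤ R * ‖j‖ * ‖x‖ := by
    intro g x hg
    calc |g (j x)| = ‖g (j x)‖ := (Real.norm_eq_abs _).symm
    _ ≤ ‖g‖ * ‖j x‖ := g.le_opNorm _
    _ ≤ R * (‖j‖ * ‖x‖) :=
        mul_le_mul hg (j.le_opNorm x) (norm_nonneg _) hR.le
    _ = R * ‖j‖ * ‖x‖ := (mul_assoc _ _ _).symm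
  set r₀ : ℝ := K1 + K2 + R * ‖j‖ * K3 with hr₀def
  set r : ℝ := r₀ + D with hrdef
  have hinf : ∀ (n : ℕ) (g : Y →L[ℝ] ℝ), ‖g‖ ≤ R →
      (⨅ z : X, Fn (g.comp j) n z) ≤ ((r₀ : ℝ) : EReal) := by
    intro n g hg
    refine le_trans (iInf_le _ (u0 n)) ?_
    rw [hFn, if_pos (hu0A n)]
    apply EReal.coe_le_coe_iff.mpr
    have h2 := hgj g (u0 n) hg
    have h3 : R * ‖j‖ * ‖u0 n‖ ≤ R * ‖j‖ * K3 :=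
      mul_le_mul_of_nonneg_left (hK3 n) (by positivity)
    have h4 : (g.comp j) (u0 n) = g (j (u0 n)) := rfl
    have h5 : -(g (j (u0 n))) ≤ |g (j (u0 n))| := neg_le_abs _
    have := hK1 n
    have := hK2 n
    rw [h4, hr₀def]
    linarith
  have hkey : ∀ (n : ℕ) (g : Y →L[ℝ] ℝ) (x : X), ‖g‖ ≤ R →
      Fn (g.comp j) n x ≤ (⨅ z : X, Fn (g.comp j) n z) + (δ n : EReal) →
      Fn (g.comp j) n x ≤ ((r : ℝ) : EReal) ∧ x ∈ A n ∧
        E x + lam n * ‖γ x‖ ^ p - g (j x) ≤ r := by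
    intro n g x hg hq
    have h1 : Fn (g.comp j) n x ≤ ((r : ℝ) : EReal) := by
      refine le_trans hq ?_
      calc (⨅ z : X, Fn (g.comp j) n z) + ((δ n : ℝ) : EReal)
          ≤ ((r₀ : ℝ) : EReal) + ((D : ℝ) : EReal) :=
            add_le_add (hinf n g hg) (EReal.coe_le_coe_iff.mpr (hD n))
      _ = ((r : ℝ) : EReal) := by rw [← EReal.coe_add, hrdef]
    refine ⟨h1, ?_⟩
    rw [hFn] at h1
    by_cases hx : x ∈ A n
    · rw [if_pos hx] at h1
      exact ⟨hx, EReal.coe_le_coe_iff.mp h1⟩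
    · rw [if_neg hx] at h1
      exact absurd h1 (by simp)
  -- extract witnesses of failure
  obtain ⟨φ, hφ, hPφ⟩ := Filter.extraction_of_frequently_atTop
    (Filter.frequently_atTop.mpr hcon)
  choose gs hgsR xs hxq hfar using hPφ
  -- uniform bound on the quasi-minimizers, via equi-coercivity
  set g' : ℕ → Y →L[ℝ] ℝ := fun n => if h : ∃ k, φ k = n then gs h.choose else 0
    with hg'def
  have hg'φ : ∀ k, g' (φ k) = gs k := by
    intro k
    have hex : ∃ k', φ k' = φ k := ⟨k, rfl⟩
    have h1 : g' (φ k) = gs hex.choose := by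
      simp only [hg'def]
      exact dif_pos hex
    rw [h1, hφ.injective hex.choose_spec]
  have hg'R : ∀ n, ‖g' n‖ ≤ R := by
    intro n
    simp only [hg'def]
    by_cases h : ∃ k, φ k = n
    · rw [dif_pos h]; exact hgsR _
    · rw [dif_neg h]; simpa using hR.le
  obtain ⟨C, hC⟩ := hcoer g' ⟨R, hg'R⟩ r
  have hxbd : ∀ k, ‖xs k‖ ≤ C := by
    intro k
    have h1 := (hkey (φ k) (gs k) (xs k) (hgsR k) (hxq k)).1
    have := hC (φ k) (xs k)
    rw [hg'φ k] at this
    exact this h1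
  -- weak-* convergent subsequence of the functionals
  obtain ⟨σ₁, hσ₁, g₀, hg₀⟩ := DeepRitzAux.weak_seq_compact
    (DeepRitzAux.dual_reflexive hYrefl) gs R hgsR
  have hgpt : ∀ y : Y, Tendsto (fun k => gs (σ₁ k) y) atTop (𝓝 (g₀ y)) := by
    intro y
    have := hg₀ (NormedSpace.inclusionInDoubleDual ℝ Y y)
    simpa using this
  -- weakly convergent subsequence of the quasi-minimizers
  obtain ⟨σ₂, hσ₂, x₀, hx₀⟩ := DeepRitzAux.weak_seq_compact hXrefl
    (fun k => xs (σ₁ k)) C (fun k => hxbd _)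
  set κ : ℕ → ℕ := fun k => σ₁ (σ₂ k) with hκdef
  set nk : ℕ → ℕ := fun k => φ (κ k) with hnkdef
  set xk : ℕ → X := fun k => xs (κ k) with hxkdef
  set gk : ℕ → Y →L[ℝ] ℝ := fun k => gs (κ k) with hgkdef
  have hκmono : StrictMono κ := hσ₁.comp hσ₂
  have hNtop : Tendsto nk atTop atTop := (hφ.comp hκmono).tendsto_atTop
  have hxw : WeakTendsto xk x₀ := fun f => hx₀ f
  have hgptk : ∀ y : Y, Tendsto (fun k => gk k y) atTop (𝓝 (g₀ y)) := fun y =>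
    (hgpt y).comp hσ₂.tendsto_atTop
  have hgkR : ∀ k, ‖gk k‖ ≤ R := fun k => hgsR _
  have hxkC : ∀ k, ‖xk k‖ ≤ C := fun k => hxbd _
  have hreal : ∀ k, E (xk k) + lam (nk k) * ‖γ (xk k)‖ ^ p - gk k (j (xk k)) ≤ r :=
    fun k => (hkey (φ (κ k)) (gs (κ k)) (xs (κ k)) (hgsR _) (hxq _)).2.2
  have hAk : ∀ k, xk k ∈ A (nk k) :=
    fun k => (hkey (φ (κ k)) (gs (κ k)) (xs (κ k)) (hgsR _) (hxq _)).2.1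
  have hjx : Tendsto (fun k => j (xk k)) atTop (𝓝 (j x₀)) := hA4 xk x₀ hxw
  -- the weak limit lies in the kernel of γ
  have hγnorm : Tendsto (fun k => ‖γ (xk k)‖) atTop (𝓝 0) := by
    have hpen_le : ∀ k, lam (nk k) * ‖γ (xk k)‖ ^ p ≤ r - m + R * ‖j‖ * C := by
      intro k
      have h1 := hreal k
      have h2 := hm (xk k)
      have h3 := hgj (gk k) (xk k) (hgkR k)
      have h4 : gk k (j (xk k)) ≤ |gk k (j (xk k))| := le_abs_self _
      have h5 : R * ‖j‖ * ‖xk k‖ ≤ R * ‖j‖ * C :=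
        mul_le_mul_of_nonneg_left (hxkC k) (by positivity)
      linarith
    have hpow0 : Tendsto (fun k => ‖γ (xk k)‖ ^ p) atTop (𝓝 0) := by
      have hd : Tendsto (fun k => (r - m + R * ‖j‖ * C) / lam (nk k)) atTop (𝓝 0) :=
        Filter.Tendsto.div_atTop tendsto_const_nhds (hlam.comp hNtop)
      refine squeeze_zero (g := fun k => (r - m + R * ‖j‖ * C) / lam (nk k))
        (fun k => Real.rpow_nonneg (norm_nonneg _) p) (fun k => ?_) hd
      exact (le_div_iff₀ (hlam_pos (nk k))).mpr
        (by rw [mul_comm]; exact hpen_le k)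
    have hrw : ∀ k, ‖γ (xk k)‖ = (‖γ (xk k)‖ ^ p) ^ (1 / p) := by
      intro k
      rw [← Real.rpow_mul (norm_nonneg _), mul_one_div, div_self (ne_of_gt hp0),
        Real.rpow_one]
    have hcrp : ContinuousAt (fun y : ℝ => y ^ (1 / p)) 0 :=
      Real.continuousAt_rpow_const 0 (1 / p) (Or.inr (by positivity))
    have h2 := hcrp.tendsto.comp hpow0
    rw [Real.zero_rpow (one_div_pos.mpr hp0).ne'] at h2
    exact h2.congr fun k => (hrw k).symm
  have hγx₀ : γ x₀ = 0 := by
    apply NormedSpace.eq_zero_of_forall_dual_eq_zero ℝ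
    intro φb
    have h1 : Tendsto (fun k => φb (γ (xk k))) atTop (𝓝 (φb (γ x₀))) :=
      hxw (φb.comp γ)
    have h2 : Tendsto (fun k => φb (γ (xk k))) atTop (𝓝 0) := by
      refine squeeze_zero_norm (fun k => ?_) (by simpa using hγnorm.const_mul ‖φb‖)
      exact φb.le_opNorm _
    exact tendsto_nhds_unique h1 h2
  have hgx : Tendsto (fun k => gk k (j (xk k))) atTop (𝓝 (g₀ (j x₀))) :=
    DeepRitzAux.tendsto_apply_seq gk g₀ R hgkR _ _ hjx (hgptk (j x₀))
  -- x₀ is the minimizer of the limit problem for g₀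
  have hmin : ∀ z : X, F (g₀.comp j) x₀ ≤ F (g₀.comp j) z := by
    intro z
    rw [hF, hF, if_pos hγx₀]
    by_cases hz : γ z = 0
    · rw [if_pos hz]
      obtain ⟨uz, huzA, huzlim, huzpen⟩ := hA1 z hz
      set vk : ℕ → ℝ := fun k =>
        E (uz (nk k)) + lam (nk k) * ‖γ (uz (nk k))‖ ^ p - gk k (j (uz (nk k)))
          + δ (nk k) with hvkdef
      have hql : ∀ k, E (xk k) - gk k (j (xk k)) ≤ vk k := by
        intro k
        have h1 : (⨅ z' : X, Fn ((gk k).comp j) (nk k) z') ≤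
            Fn ((gk k).comp j) (nk k) (uz (nk k)) := iInf_le _ _
        have h2 : Fn ((gk k).comp j) (nk k) (xk k) ≤
            Fn ((gk k).comp j) (nk k) (uz (nk k)) + ((δ (nk k) : ℝ) : EReal) :=
          le_trans (hxq (κ k)) (add_le_add_left h1 _)
        rw [hFn, hFn, if_pos (hAk k), if_pos (huzA (nk k)), ← EReal.coe_add] at h2
        have h3 := EReal.coe_le_coe_iff.mp h2
        have h4 := hpen_nn (nk k) (xk k)
        have h5 : ((gk k).comp j) (xk k) = gk k (j (xk k)) := rfl
        have h6 : ((gk k).comp j) (uz (nk k)) = gk k (j (uz (nk k))) := rfl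
        rw [h5, h6] at h3
        simp only [hvkdef]
        linarith
      have hvklim : Tendsto vk atTop (𝓝 (E z + 0 - g₀ (j z) + 0)) := by
        have h1 : Tendsto (fun k => E (uz (nk k))) atTop (𝓝 (E z)) :=
          (hEcont.tendsto z).comp (huzlim.comp hNtop)
        have h2 : Tendsto (fun k => lam (nk k) * ‖γ (uz (nk k))‖ ^ p) atTop (𝓝 0) :=
          huzpen.comp hNtop
        have h3 : Tendsto (fun k => gk k (j (uz (nk k)))) atTop (𝓝 (g₀ (j z))) := by
          refine DeepRitzAux.tendsto_apply_seq gk g₀ R hgkR _ _ ?_ (hgptk (j z))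
          exact (j.continuous.tendsto z).comp (huzlim.comp hNtop)
        have h4 : Tendsto (fun k => δ (nk k)) atTop (𝓝 0) := hδ.comp hNtop
        exact ((h1.add h2).sub h3).add h4
      have hck : Tendsto (fun k => vk k + gk k (j (xk k))) atTop
          (𝓝 (E z + 0 - g₀ (j z) + 0 + g₀ (j x₀))) := hvklim.add hgx
      have hlsc := hElsc x₀ xk hxw
      have hmono : liminf (fun k => ((E (xk k) : ℝ) : EReal)) atTop ≤
          ((E z + 0 - g₀ (j z) + 0 + g₀ (j x₀) : ℝ) : EReal) := by
        have h1 : ∀ k, ((E (xk k) : ℝ) : EReal) ≤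
            ((vk k + gk k (j (xk k)) : ℝ) : EReal) := fun k =>
          EReal.coe_le_coe_iff.mpr (by linarith [hql k])
        calc liminf (fun k => ((E (xk k) : ℝ) : EReal)) atTop
            ≤ liminf (fun k => ((vk k + gk k (j (xk k)) : ℝ) : EReal)) atTop :=
              liminf_le_liminf (Eventually.of_forall h1)
        _ = _ := (EReal.tendsto_coe.mpr hck).liminf_eq
      have hfin := EReal.coe_le_coe_iff.mp (le_trans hlsc hmono)
      apply EReal.coe_le_coe_iff.mpr
      have h7 : (g₀.comp j) x₀ = g₀ (j x₀) := rfl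
      have h8 : (g₀.comp j) z = g₀ (j z) := rfl
      rw [h7, h8]
      linarith
    · rw [if_neg hz]
      exact le_top
  have hx₀eq : x₀ = (S ((g₀.comp j).comp (LinearMap.ker (γ : X →ₗ[ℝ] B)).subtypeL) : X) :=
    hS_uniq (g₀.comp j) x₀ hγx₀ hmin
  -- strong convergence of the restricted functionals
  set φf : ℕ → ↥(LinearMap.ker (γ : X →ₗ[ℝ] B)) →L[ℝ] ℝ :=
    fun k => ((gk k).comp j).comp (LinearMap.ker (γ : X →ₗ[ℝ] B)).subtypeL with hφfdef
  set φf₀ : ↥(LinearMap.ker (γ : X →ₗ[ℝ] B)) →L[ℝ] ℝ :=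
    (g₀.comp j).comp (LinearMap.ker (γ : X →ₗ[ℝ] B)).subtypeL with hφf₀def
  have hφnorm : Tendsto φf atTop (𝓝 φf₀) := by
    refine (tendsto_iff_norm_sub_tendsto_zero (E := ↥(LinearMap.ker (γ : X →ₗ[ℝ] B)) →L[ℝ] ℝ) (f := φf) (b := φf₀)).mpr ?_
    by_contra hcon8
    rw [Metric.tendsto_atTop] at hcon8
    push_neg at hcon8
    obtain ⟨η, hη, hfreq8⟩ := hcon8
    obtain ⟨θ, hθ, hθp⟩ := Filter.extraction_of_frequently_atTop
      (Filter.frequently_atTop.mpr hfreq8)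
    have hθp' : ∀ k, η ≤ ‖φf (θ k) - φf₀‖ := by
      intro k
      have := hθp k
      rw [Real.dist_eq, sub_zero] at this
      exact le_trans this (le_of_eq (abs_of_nonneg (norm_nonneg (φf (θ k) - φf₀))))
    have hzex : ∀ k, ∃ zz : ↥(LinearMap.ker (γ : X →ₗ[ℝ] B)), ‖zz‖ < 1 ∧
        η / 2 < ‖(φf (θ k) - φf₀) zz‖ := fun k =>
      (φf (θ k) - φf₀).exists_lt_apply_of_lt_opNorm
        (lt_of_lt_of_le (half_lt_self hη) (hθp' k))
    choose zz hz1 hz2 using hzex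
    obtain ⟨σ₃, hσ₃, z₀, hz₀w⟩ := DeepRitzAux.weak_seq_compact hXrefl
      (fun k => (zz k : X)) 1 (fun k => (hz1 k).le)
    have hjz : Tendsto (fun k => j ((zz (σ₃ k) : X))) atTop (𝓝 (j z₀)) :=
      hA4 _ _ (fun f => hz₀w f)
    have hdiff : Tendsto (fun k => (gk (θ (σ₃ k)) - g₀) (j ((zz (σ₃ k) : X))))
        atTop (𝓝 ((0 : Y →L[ℝ] ℝ) (j z₀))) := by
      refine DeepRitzAux.tendsto_apply_seq (fun k => gk (θ (σ₃ k)) - g₀) 0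
        (R + ‖g₀‖) (fun k => le_trans (norm_sub_le _ _)
          (add_le_add_left (hgkR _) _)) _ _ hjz ?_
      have h1 := ((hgptk (j z₀)).comp ((hθ.comp hσ₃).tendsto_atTop)).sub_const
        (g₀ (j z₀))
      simpa using h1
    have h2 : Tendsto (fun k => ‖(gk (θ (σ₃ k)) - g₀) (j ((zz (σ₃ k) : X)))‖)
        atTop (𝓝 0) := by simpa using hdiff.norm
    have h3 := h2.eventually (eventually_lt_nhds (half_pos hη))
    obtain ⟨k, hk⟩ := h3.exists
    have h4 : (φf (θ (σ₃ k)) - φf₀) (zz (σ₃ k)) =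
        (gk (θ (σ₃ k)) - g₀) (j ((zz (σ₃ k) : X))) := by
      simp [hφfdef, hφf₀def]
    have h5 := hz2 (σ₃ k)
    rw [h4] at h5
    linarith
  have hSweak : WeakTendsto (fun k => (S (φf k) : X)) (S φf₀ : X) := by
    intro f
    exact hS_demi φf φf₀ hφnorm (f.comp (LinearMap.ker (γ : X →ₗ[ℝ] B)).subtypeL)
  have hjS : Tendsto (fun k => j ((S (φf k) : X))) atTop (𝓝 (j (S φf₀ : X))) :=
    hA4 _ _ hSweak
  have hfinal : Tendsto (fun k => ‖j (xk k) - j ((S (φf k) : X))‖) atTop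
      (𝓝 ‖j x₀ - j ((S φf₀ : X))‖) := (hjx.sub hjS).norm
  rw [hx₀eq] at hfinal
  simp only [sub_self, norm_zero] at hfinal
  have h6 := hfinal.eventually (eventually_lt_nhds hε)
  obtain ⟨k, hk⟩ := h6.exists
  have h7 := hfar (κ k)
  have h8 : ((gs (κ k)).comp j).comp (LinearMap.ker (γ : X →ₗ[ℝ] B)).subtypeL = φf k := rfl
  rw [h8] at h7
  linarith
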